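/- arXiv:2306.05699 — 11 statements merged into one kernel-verified Lean document; each statement's English description precedes it below -/
import Mathlib

section
/- If G is a connected bipartite graph and uv is an edge of G, then Tr_G(u) − Tr_G(v) = n_v(uv) − n_u(uv), where n_u(uv) is the number of vertices strictly closer to u than to v, and n_v(uv) the number strictly closer to v than to u. -/
/-- The transmission of a vertex: sum of distances to all vertices. -/
noncomputable def Tr {V : Type*} [Fintype V] (G : SimpleGraph V) (u : V) : ℕ :=
  ∑ x : V, G.dist u x

/-- `G` is a `k`-STI graph: transmissions of endpoints of every edge differ by exactly `k`. -/
def IsKSTI {V : Type*} [Fintype V] (G : SimpleGraph V) (k : ℕ) : Prop :=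
  ∀ u v : V, G.Adj u v → ((Tr G u : ℤ) - (Tr G v : ℤ)).natAbs = k

lemma walk_parity {V : Type*} {G : SimpleGraph V} (c : G.Coloring (Fin 2)) {a b : V}
    (p : G.Walk a b) : Even p.length ↔ c a = c b := by
  induction p with
  | nil => simp
  | @cons x y z h p ih =>
    have hxy : c x ≠ c y := c.valid h
    have key : ∀ x' y' z' : Fin 2, x' ≠ y' → (¬(y' = z') ↔ x' = z') := by decide
    simp only [SimpleGraph.Walk.length_cons, Nat.even_add_one, ih]
    exact key _ _ _ hxy

lemma dist_ne {V : Type*} {G : SimpleGraph V} (hconn : G.Connected)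
    (hbip : G.Colorable 2) {u v : V} (huv : G.Adj u v) (w : V) :
    G.dist w u ≠ G.dist w v := by
  obtain ⟨c⟩ := hbip
  obtain ⟨p, hp⟩ := hconn.exists_walk_length_eq_dist w u
  obtain ⟨q, hq⟩ := hconn.exists_walk_length_eq_dist w v
  intro h
  have h1 : Even p.length ↔ c w = c u := walk_parity c p
  have h2 : Even q.length ↔ c w = c v := walk_parity c q
  have hcu : c u ≠ c v := c.valid huv
  rw [hp, h] at h1
  rw [hq] at h2
  have : c u = c v := by
    by_cases hw : c w = c u
    · have := h2.mp (h1.mpr hw); rw [← hw, this]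
    · have key : ∀ x' y' z' : Fin 2, ¬(x' = y') → ¬(x' = z') → y' = z' := by decide
      have hw2 : ¬ (c w = c v) := fun hh => hw (h1.mp (h2.mpr hh))
      exact key _ _ _ hw hw2
  exact hcu this

lemma dist_diff {V : Type*} {G : SimpleGraph V} (hconn : G.Connected)
    (hbip : G.Colorable 2) {u v : V} (huv : G.Adj u v) (w : V) :
    (G.dist u w : ℤ) - G.dist v w = 1 ∨ (G.dist u w : ℤ) - G.dist v w = -1 := by
  have h1 : G.dist u w ≤ G.dist v w + 1 := by
    calc G.dist u w ≤ G.dist u v + G.dist v w := hconn.dist_triangle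
    _ = G.dist v w + 1 := by
        rw [SimpleGraph.dist_eq_one_iff_adj.mpr huv]; omega
  have h2 : G.dist v w ≤ G.dist u w + 1 := by
    calc G.dist v w ≤ G.dist v u + G.dist u w := hconn.dist_triangle
    _ = G.dist u w + 1 := by
        rw [SimpleGraph.dist_eq_one_iff_adj.mpr huv.symm]; omega
  have hne : G.dist w u ≠ G.dist w v := dist_ne hconn hbip huv w
  rw [SimpleGraph.dist_comm (u := w) (v := u), SimpleGraph.dist_comm (u := w) (v := v)] at hne
  omega

theorem stmt_2 {V : Type*} [Fintype V] (G : SimpleGraph V) (hconn : G.Connected)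
    (hbip : G.Colorable 2) (u v : V) (huv : G.Adj u v) :
    (Tr G u : ℤ) - (Tr G v : ℤ) =
      (Nat.card {w : V | G.dist w v < G.dist w u} : ℤ) -
      (Nat.card {w : V | G.dist w u < G.dist w v} : ℤ) := by
  classical
  have key := dist_diff hconn hbip huv
  have h1 : Nat.card {w : V | G.dist w v < G.dist w u} =
      (Finset.univ.filter (fun w => G.dist w v < G.dist w u)).card := by
    rw [Nat.card_eq_fintype_card]; exact Fintype.card_subtype _
  have h2 : Nat.card {w : V | G.dist w u < G.dist w v} =
      (Finset.univ.filter (fun w => G.dist w u < G.dist w v)).card := by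
    rw [Nat.card_eq_fintype_card]; exact Fintype.card_subtype _
  rw [h1, h2]
  have hTr : (Tr G u : ℤ) - (Tr G v : ℤ) = ∑ x : V, ((G.dist u x : ℤ) - G.dist v x) := by
    simp [Tr, Finset.sum_sub_distrib]
  rw [hTr]
  rw [← Finset.sum_filter_add_sum_filter_not Finset.univ (fun w => G.dist v w < G.dist u w)]
  have e1 : ∀ w ∈ Finset.univ.filter (fun w => G.dist v w < G.dist u w),
      (G.dist u w : ℤ) - G.dist v w = 1 := by
    intro w hw
    simp only [Finset.mem_filter] at hw
    rcases key w with h | h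
    · exact h
    · exfalso; omega
  have e2 : ∀ w ∈ Finset.univ.filter (fun w => ¬ G.dist v w < G.dist u w),
      (G.dist u w : ℤ) - G.dist v w = -1 := by
    intro w hw
    simp only [Finset.mem_filter] at hw
    rcases key w with h | h
    · exfalso; omega
    · exact h
  rw [Finset.sum_congr rfl e1, Finset.sum_congr rfl e2]
  have hset1 : Finset.univ.filter (fun w => G.dist v w < G.dist u w) =
      Finset.univ.filter (fun w => G.dist w v < G.dist w u) := by
    apply Finset.filter_congr; intro w _
    rw [SimpleGraph.dist_comm (u := v) (v := w), SimpleGraph.dist_comm (u := u) (v := w)]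
  have hset2 : Finset.univ.filter (fun w => ¬ G.dist v w < G.dist u w) =
      Finset.univ.filter (fun w => G.dist w u < G.dist w v) := by
    apply Finset.filter_congr; intro w _
    rw [SimpleGraph.dist_comm (u := v) (v := w), SimpleGraph.dist_comm (u := u) (v := w)]
    have hne := dist_ne hconn hbip huv w
    constructor
    · intro h; omega
    · intro h; omega
  rw [hset1, hset2]
  simp [Finset.sum_const, mul_comm]
  ring
end

section
/- If k ≥ 1 and G is a connected k-STI graph, then G contains no odd cycle, i.e., G is bipartite. -/
theorem stmt_4 {V : Type*} [Fintype V] (G : SimpleGraph V) (hconn : G.Connected)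
    (k : ℕ) (hk : 1 ≤ k) (hsti : IsKSTI G k) : G.Colorable 2 := by
  refine ⟨SimpleGraph.Coloring.mk (fun u => ⟨(Tr G u / k) % 2, by omega⟩) ?_⟩
  intro u v huv
  have h := hsti u v huv
  have hcase : Tr G u = Tr G v + k ∨ Tr G v = Tr G u + k := by omega
  have hne : Tr G u / k % 2 ≠ Tr G v / k % 2 := by
    rcases hcase with hc | hc <;>
      rw [hc, Nat.add_div_right _ (by omega : 0 < k)] <;> omega
  simp [Fin.ext_iff]
  exact hne
end

section
/- If G is a connected k-STI graph with at least one edge (k ≥ 1), then the number of vertices of G is congruent to k modulo 2. -/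
/-- Along any walk from `u` to `x`, the transmission changes by `length · k` mod `2k`. -/
lemma tr_walk_mod {V : Type*} [Fintype V] (G : SimpleGraph V) (k : ℕ)
    (hsti : IsKSTI G k) {u x : V} (w : G.Walk u x) :
    (2 * (k : ℤ)) ∣ ((Tr G x : ℤ) - (Tr G u : ℤ) - w.length * k) := by
  induction w with
  | nil => simp
  | @cons a b c hab p ih =>
    have hedge := hsti a b hab
    have h2 : (Tr G a : ℤ) - Tr G b = k ∨ (Tr G a : ℤ) - Tr G b = -k :=
      Int.natAbs_eq_iff.mp hedge
    have key : ((Tr G c : ℤ) - Tr G a - (p.cons hab).length * k)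
        = ((Tr G c : ℤ) - Tr G b - p.length * k) + ((Tr G b : ℤ) - Tr G a - k) := by
      simp [SimpleGraph.Walk.length_cons]; ring
    rw [key]
    refine dvd_add ih ?_
    rcases h2 with h | h
    · have : (Tr G b : ℤ) - Tr G a - k = -(2 * k) := by linarith
      rw [this]; exact dvd_neg.mpr dvd_rfl
    · have : (Tr G b : ℤ) - Tr G a - k = 0 := by linarith
      rw [this]; exact dvd_zero _

theorem stmt_7 {V : Type*} [Fintype V] (G : SimpleGraph V) (hconn : G.Connected)
    (hedge : ∃ u v : V, G.Adj u v) (k : ℕ) (hk : 1 ≤ k) (hsti : IsKSTI G k) :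
    Fintype.card V % 2 = k % 2 := by
  obtain ⟨u, v, huv⟩ := hedge
  have hkz : (k : ℤ) ≠ 0 := Int.natCast_ne_zero.mpr (Nat.one_le_iff_ne_zero.mp hk)
  -- Step 1: for every x, dist u x + dist v x is odd
  have hodd : ∀ x : V, Odd (G.dist u x + G.dist v x) := by
    intro x
    obtain ⟨wu, hwu⟩ := (hconn u x).exists_walk_length_eq_dist
    obtain ⟨wv, hwv⟩ := (hconn v x).exists_walk_length_eq_dist
    have h1 := tr_walk_mod G k hsti wu
    have h2 := tr_walk_mod G k hsti wv
    rw [hwu] at h1; rw [hwv] at h2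
    have hedge2 : (Tr G u : ℤ) - Tr G v = k ∨ (Tr G u : ℤ) - Tr G v = -k :=
      Int.natAbs_eq_iff.mp (hsti u v huv)
    -- 2k ∣ (d v x - d u x - 1) * k  (possibly after sign adjustment)
    have hdvd : (2 * (k : ℤ)) ∣ ((G.dist v x : ℤ) - G.dist u x - 1) * k ∨
        (2 * (k : ℤ)) ∣ ((G.dist v x : ℤ) - G.dist u x + 1) * k := by
      rcases hedge2 with h | h
      · left
        have := dvd_sub h1 h2
        have heq : ((Tr G x : ℤ) - Tr G u - G.dist u x * k)
            - ((Tr G x : ℤ) - Tr G v - G.dist v x * k)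
            = ((G.dist v x : ℤ) - G.dist u x - 1) * k - ((Tr G u : ℤ) - Tr G v - k) := by
          ring
        rw [heq, h] at this
        simpa using this
      · right
        have := dvd_sub h1 h2
        have heq : ((Tr G x : ℤ) - Tr G u - G.dist u x * k)
            - ((Tr G x : ℤ) - Tr G v - G.dist v x * k)
            = ((G.dist v x : ℤ) - G.dist u x + 1) * k - ((Tr G u : ℤ) - Tr G v + k) := by
          ring
        rw [heq, h] at this
        simpa using this
    have hm : (2 : ℤ) ∣ ((G.dist v x : ℤ) - G.dist u x - 1) ∨
        (2 : ℤ) ∣ ((G.dist v x : ℤ) - G.dist u x + 1) := by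
      rcases hdvd with h | h
      · left
        exact (mul_dvd_mul_iff_right hkz).mp h
      · right
        exact (mul_dvd_mul_iff_right hkz).mp h
    have : Odd ((G.dist u x : ℤ) + G.dist v x) := by
      rcases hm with ⟨m, hm⟩ | ⟨m, hm⟩
      · exact ⟨m + G.dist u x, by linarith⟩
      · exact ⟨m + G.dist u x - 1, by linarith⟩
    exact_mod_cast this
  -- Step 2: Tr u + Tr v ≡ card V (mod 2), and k ≡ Tr u + Tr v (mod 2)
  have hsum : ((Tr G u + Tr G v : ℕ) : ZMod 2) = (Fintype.card V : ZMod 2) := by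
    have : (Tr G u + Tr G v : ℕ) = ∑ x : V, (G.dist u x + G.dist v x) := by
      rw [Tr, Tr, ← Finset.sum_add_distrib]
    rw [this]
    push_cast
    rw [Finset.card_univ.symm, Finset.card_eq_sum_ones]
    push_cast
    apply Finset.sum_congr rfl
    intro x _
    obtain ⟨m, hm⟩ := hodd x
    have : ((G.dist u x + G.dist v x : ℕ) : ZMod 2) = ((2 * m + 1 : ℕ) : ZMod 2) := by
      exact_mod_cast congrArg (Nat.cast : ℕ → ZMod 2) hm
    push_cast at this
    rw [this, show ((2:ZMod 2)) = 0 by decide, zero_mul, zero_add]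
  have hk2 : ((k : ℕ) : ZMod 2) = ((Tr G u + Tr G v : ℕ) : ZMod 2) := by
    have hedge2 : (Tr G u : ℤ) - Tr G v = k ∨ (Tr G u : ℤ) - Tr G v = -k :=
      Int.natAbs_eq_iff.mp (hsti u v huv)
    have hneg : ∀ a : ZMod 2, -a = a := fun a => CharTwo.neg_eq a
    rcases hedge2 with h | h <;>
    · have hc := congrArg (Int.cast : ℤ → ZMod 2) h
      push_cast at hc ⊢
      rw [sub_eq_add_neg] at hc
      simp only [hneg] at hc
      exact hc.symm
  have final : ((Fintype.card V : ℕ) : ZMod 2) = ((k : ℕ) : ZMod 2) := by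
    rw [hk2, hsum]
  exact (ZMod.natCast_eq_natCast_iff _ _ _).mp final.symm |>.symm
end

section
/- If G is a connected k-STI graph (k ≥ 1) with minimum degree at least 2, then G has no bridge, i.e., G is 2-edge-connected. -/
private lemma reach_of_not_mem_edges {V : Type*} {G : SimpleGraph V} {a b : V}
    (p : G.Walk a b) {e : Sym2 V} (he : e ∉ p.edges) :
    (G \ SimpleGraph.fromEdgeSet {e}).Reachable a b :=
  ⟨p.toDeleteEdge e he⟩

/-- If every shortest walk from `a` to `b` must pass through `c`, we get the split
inequality; here we package the step: a walk containing `c` in its support has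
length at least `dist a c + dist c b`. -/
private lemma dist_split {V : Type*} [DecidableEq V] {G : SimpleGraph V} {a b c : V}
    (p : G.Walk a b) (hc : c ∈ p.support) :
    G.dist a c + G.dist c b ≤ p.length := by
  have hlen := congrArg SimpleGraph.Walk.length (p.take_spec hc)
  rw [SimpleGraph.Walk.length_append] at hlen
  calc G.dist a c + G.dist c b
      ≤ (p.takeUntil c hc).length + (p.dropUntil c hc).length :=
        Nat.add_le_add (SimpleGraph.dist_le _) (SimpleGraph.dist_le _)
    _ = p.length := hlen

private lemma key_ineq {V : Type*} [Fintype V] (G : SimpleGraph V)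
    (hconn : G.Connected) {u v w : V} (huv : G.Adj u v) (huw : G.Adj u w) (hwv : w ≠ v)
    (hnr : ¬ (G \ SimpleGraph.fromEdgeSet {s(u, v)}).Reachable u v) :
    (Tr G u : ℤ) - Tr G v + 2 ≤ (Tr G w : ℤ) - Tr G u := by
  classical
  set G' := G \ SimpleGraph.fromEdgeSet {s(u, v)} with hG'
  have huw' : G'.Reachable u w := by
    refine SimpleGraph.Adj.reachable ?_
    rw [hG', SimpleGraph.sdiff_adj]
    refine ⟨huw, ?_⟩
    rw [SimpleGraph.fromEdgeSet_adj]
    rintro ⟨hmem, -⟩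
    rcases (by simpa using hmem : w = v ∨ u = v ∧ w = u) with h | ⟨h1, -⟩
    · exact hwv h
    · exact G.irrefl (h1 ▸ huv)
  have hdvu : G.dist v u = 1 := by
    rw [SimpleGraph.dist_eq_one_iff_adj]; exact huv.symm
  have hduv : G.dist u v = 1 := by
    rw [SimpleGraph.dist_eq_one_iff_adj]; exact huv
  have hdwu : G.dist w u = 1 := by
    rw [SimpleGraph.dist_eq_one_iff_adj]; exact huw.symm
  have hduw : G.dist u w = 1 := by
    rw [SimpleGraph.dist_eq_one_iff_adj]; exact huw
  -- pointwise inequality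
  have hpt : ∀ x : V, (G.dist u x : ℤ) - G.dist v x + (if x = u then 2 else 0)
      ≤ (G.dist w x : ℤ) - G.dist u x := by
    intro x
    by_cases hxu : x = u
    · subst hxu
      simp [SimpleGraph.dist_self, hdvu, hdwu]
    · by_cases hx : G'.Reachable u x
      · -- x on u's side: dist v x = 1 + dist u x, and triangle for w
        have h1 : G.dist v x = 1 + G.dist u x := by
          have hle : G.dist v x ≤ 1 + G.dist u x := by
            calc G.dist v x ≤ G.dist v u + G.dist u x := hconn.dist_triangle
              _ = 1 + G.dist u x := by rw [hdvu]
          have hge : 1 + G.dist u x ≤ G.dist v x := by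
            obtain ⟨p, hp⟩ := (hconn v x).exists_walk_length_eq_dist
            by_cases hmem : s(u, v) ∈ p.edges
            · have hu : u ∈ p.support := p.fst_mem_support_of_mem_edges hmem
              have := dist_split p hu
              rw [hp, hdvu] at this
              exact this
            · exact absurd (hx.trans (reach_of_not_mem_edges p hmem).symm) hnr
          omega
        have h2 : G.dist u x ≤ 1 + G.dist w x := by
          calc G.dist u x ≤ G.dist u w + G.dist w x := hconn.dist_triangle
            _ = 1 + G.dist w x := by rw [hduw]
        simp only [if_neg hxu]
        push_cast [h1]
        omega
      · -- x on v's side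
        have h1 : G.dist u x = 1 + G.dist v x := by
          have hle : G.dist u x ≤ 1 + G.dist v x := by
            calc G.dist u x ≤ G.dist u v + G.dist v x := hconn.dist_triangle
              _ = 1 + G.dist v x := by rw [hduv]
          have hge : 1 + G.dist v x ≤ G.dist u x := by
            obtain ⟨p, hp⟩ := (hconn u x).exists_walk_length_eq_dist
            by_cases hmem : s(u, v) ∈ p.edges
            · have hv : v ∈ p.support := p.snd_mem_support_of_mem_edges hmem
              have := dist_split p hv
              rw [hp, hduv] at this
              exact this
            · exact absurd (reach_of_not_mem_edges p hmem) hx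
          omega
        have h2 : 1 + G.dist u x ≤ G.dist w x := by
          obtain ⟨p, hp⟩ := (hconn w x).exists_walk_length_eq_dist
          by_cases hmem : s(u, v) ∈ p.edges
          · have hu : u ∈ p.support := p.fst_mem_support_of_mem_edges hmem
            have := dist_split p hu
            rw [hp, hdwu] at this
            exact this
          · exact absurd (huw'.trans (reach_of_not_mem_edges p hmem)) hx
        simp only [if_neg hxu]
        push_cast [h1]
        omega
  have hsum := Finset.sum_le_sum (fun x (_ : x ∈ Finset.univ) => hpt x)
  simp only [Finset.sum_add_distrib, Finset.sum_sub_distrib,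
    Finset.sum_ite_eq' Finset.univ u (fun _ => (2 : ℤ)), Finset.mem_univ, if_true] at hsum
  unfold Tr
  push_cast
  convert hsum using 2 <;> simp [Finset.sum_sub_distrib]

private lemma aux_no_bridge {V : Type*} [Fintype V] (G : SimpleGraph V) [DecidableRel G.Adj]
    (hconn : G.Connected) (k : ℕ) (hsti : IsKSTI G k)
    (hdeg : ∀ v : V, 2 ≤ G.degree v) {u v : V} (hadj : G.Adj u v)
    (hnr : ¬ (G \ SimpleGraph.fromEdgeSet {s(u, v)}).Reachable u v)
    (hge : (Tr G v : ℤ) ≤ Tr G u) : False := by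
  -- pick a neighbor w of u different from v
  obtain ⟨w, hwmem, hwv⟩ := Finset.exists_mem_ne
    (by rw [SimpleGraph.card_neighborFinset_eq_degree]; have := hdeg u; omega :
      1 < (G.neighborFinset u).card) v
  have huw : G.Adj u w := by rwa [SimpleGraph.mem_neighborFinset] at hwmem
  have hkey := key_ineq G hconn hadj huw hwv hnr
  have h1 := hsti u v hadj
  have h2 := hsti w u huw.symm
  have e1 : (Tr G u : ℤ) - Tr G v = k := by
    rw [← h1]; exact (Int.natAbs_of_nonneg (by omega)).symm
  have e2 : (Tr G w : ℤ) - Tr G u ≤ k := by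
    rw [← h2]; exact Int.le_natAbs
  omega

theorem stmt_8 {V : Type*} [Fintype V] (G : SimpleGraph V) [DecidableRel G.Adj]
    (hconn : G.Connected) (k : ℕ) (hk : 1 ≤ k) (hsti : IsKSTI G k)
    (hdeg : ∀ v : V, 2 ≤ G.degree v) :
    ∀ u v : V, G.Adj u v → ¬ G.IsBridge s(u, v) := by
  intro u v hadj hbr
  have hnr := (SimpleGraph.isBridge_iff).mp hbr
  rcases le_total ((Tr G v : ℤ)) ((Tr G u : ℤ)) with h | h
  · exact aux_no_bridge G hconn k hsti hdeg hadj hnr h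
  · refine aux_no_bridge G hconn k hsti hdeg hadj.symm ?_ h
    rw [Sym2.eq_swap]
    exact fun hr => hnr hr.symm
end

section
/- If G is a connected 2-STI graph of order at least 5, then G has no vertex of degree 1. -/
theorem stmt_9 {V : Type*} [Fintype V] (G : SimpleGraph V) [DecidableRel G.Adj]
    (hconn : G.Connected) (hn : 5 ≤ Fintype.card V) (hsti : IsKSTI G 2) :
    ∀ v : V, G.degree v ≠ 1 := by
  classical
  intro v hdeg
  rw [← SimpleGraph.card_neighborFinset_eq_degree] at hdeg
  obtain ⟨u, hu⟩ := Finset.card_eq_one.mp hdeg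
  have hadj : G.Adj v u := by
    have : u ∈ G.neighborFinset v := by rw [hu]; exact Finset.mem_singleton_self u
    rwa [SimpleGraph.mem_neighborFinset] at this
  have huniq : ∀ w, G.Adj v w → w = u := by
    intro w hw
    have : w ∈ G.neighborFinset v := (SimpleGraph.mem_neighborFinset ..).mpr hw
    rwa [hu, Finset.mem_singleton] at this
  have hdist : ∀ x, x ≠ v → G.dist v x = G.dist u x + 1 := by
    intro x hx
    have h1 : G.dist v x ≤ G.dist u x + 1 := by
      have := hconn.dist_triangle (u := v) (v := u) (w := x)
      have huv : G.dist v u = 1 := SimpleGraph.dist_eq_one_iff_adj.mpr hadj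
      omega
    have h2 : G.dist u x + 1 ≤ G.dist v x := by
      obtain ⟨p, hp⟩ := hconn.exists_walk_length_eq_dist v x
      cases p with
      | nil => exact absurd rfl hx
      | cons h q =>
        have hb := huniq _ h
        have hq : G.dist u x ≤ q.length := hb ▸ SimpleGraph.dist_le q
        simp only [SimpleGraph.Walk.length_cons] at hp
        omega
    omega
  have huv1 : G.dist u v = 1 := SimpleGraph.dist_eq_one_iff_adj.mpr hadj.symm
  have key : Tr G v + 2 = Tr G u + Fintype.card V := by
    unfold Tr
    rw [← Finset.sum_erase_add _ _ (Finset.mem_univ v),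
      ← Finset.sum_erase_add _ _ (Finset.mem_univ v)]
    rw [SimpleGraph.dist_self, huv1]
    rw [Finset.sum_congr rfl (fun x hx => hdist x (Finset.ne_of_mem_erase hx))]
    rw [Finset.sum_add_distrib, Finset.sum_const, smul_eq_mul, mul_one,
      Finset.card_erase_of_mem (Finset.mem_univ v), Finset.card_univ]
    omega
  have hs := hsti v u hadj
  have h5 : 5 ≤ Fintype.card V := hn
  omega
end

section
/- If G is a connected 2-STI graph of order at least 5, then G has no cut vertex (G is 2-connected). -/
namespace STIAux

open Finset
open scoped Classical

variable {V : Type*} [Fintype V] {G : SimpleGraph V}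

/-- Reachability avoiding a vertex `v`. -/
def R (G : SimpleGraph V) (v s t : V) : Prop := ∃ p : G.Walk s t, v ∉ p.support

lemma Rsymm {v s t : V} (h : R G v s t) : R G v t s := by
  obtain ⟨p, hp⟩ := h
  exact ⟨p.reverse, by simpa using hp⟩

lemma Rtrans {v s t w : V} (h1 : R G v s t) (h2 : R G v t w) : R G v s w := by
  obtain ⟨p, hp⟩ := h1
  obtain ⟨q, hq⟩ := h2
  refine ⟨p.append q, fun hmem => ?_⟩
  rcases (SimpleGraph.Walk.mem_support_append_iff _ _).mp hmem with h | h
  exacts [hp h, hq h]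

lemma Rne {v s t : V} (h : R G v s t) : s ≠ v := by
  obtain ⟨p, hp⟩ := h
  exact fun hs => hp (hs ▸ p.start_mem_support)

/-- The reachability class of `x` in `G - v`. -/
noncomputable def cls (G : SimpleGraph V) (v x : V) : Finset V :=
  Finset.univ.filter (fun z => R G v z x)

/-- The complement of the class of `x` (and of `v`). -/
noncomputable def Bst (G : SimpleGraph V) (v x : V) : Finset V :=
  Finset.univ.filter (fun z => z ≠ v ∧ ¬ R G v z x)

lemma mem_cls {v x z : V} : z ∈ cls G v x ↔ R G v z x := by simp [cls]

lemma mem_Bst {v x z : V} : z ∈ Bst G v x ↔ z ≠ v ∧ ¬ R G v z x := by simp [Bst]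

lemma self_mem_cls {v x : V} (hx : x ≠ v) : x ∈ cls G v x := by
  refine mem_cls.mpr ⟨SimpleGraph.Walk.nil, ?_⟩
  simp only [SimpleGraph.Walk.support_nil, List.mem_singleton]
  exact fun h => hx h.symm

lemma mem_cls_of_adj {v x s t : V} (hs : s ∈ cls G v x) (h : G.Adj s t) (ht : t ≠ v) :
    t ∈ cls G v x := by
  have hsv : s ≠ v := Rne (mem_cls.mp hs)
  refine mem_cls.mpr (Rtrans ⟨SimpleGraph.Walk.cons h.symm .nil, ?_⟩ (mem_cls.mp hs))
  simp only [SimpleGraph.Walk.support_cons, SimpleGraph.Walk.support_nil, List.mem_cons,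
    List.mem_singleton, List.not_mem_nil]
  rintro (h1 | h1 | h1)
  · exact ht h1.symm
  · exact hsv h1.symm
  · exact h1

lemma v_notMem_cls {v x : V} : v ∉ cls G v x := fun h => (Rne (mem_cls.mp h)) rfl

lemma v_notMem_Bst {v x : V} : v ∉ Bst G v x := fun h => (mem_Bst.mp h).1 rfl

lemma disj {v x : V} : Disjoint (insert v (cls G v x)) (Bst G v x) := by
  rw [Finset.disjoint_left]
  intro z hz hzB
  rcases Finset.mem_insert.mp hz with rfl | hz
  · exact (mem_Bst.mp hzB).1 rfl
  · exact (mem_Bst.mp hzB).2 (mem_cls.mp hz)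

lemma univ_eq (v x : V) : (Finset.univ : Finset V) = insert v (cls G v x) ∪ Bst G v x := by
  ext z
  simp only [Finset.mem_univ, true_iff, Finset.mem_union, Finset.mem_insert, mem_cls, mem_Bst]
  by_cases h1 : z = v
  · tauto
  · by_cases h2 : R G v z x <;> tauto

lemma card_eq (v x : V) :
    Fintype.card V = (cls G v x).card + (Bst G v x).card + 1 := by
  rw [← Finset.card_univ, univ_eq v x (G := G), Finset.card_union_of_disjoint disj,
    Finset.card_insert_of_notMem v_notMem_cls]
  omega

lemma sum_split (v x : V) (f : V → ℤ) :
    ∑ z, f z = f v + ∑ z ∈ cls G v x, f z + ∑ z ∈ Bst G v x, f z := by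
  rw [univ_eq v x (G := G), Finset.sum_union disj, Finset.sum_insert v_notMem_cls]

lemma dist_split (hconn : G.Connected) {v x s t : V}
    (hs : s ∈ cls G v x) (ht : t ∈ Bst G v x) :
    G.dist s t = G.dist s v + G.dist v t := by
  refine le_antisymm hconn.dist_triangle ?_
  obtain ⟨p, hp⟩ := (hconn.preconnected s t).exists_walk_length_eq_dist
  have hv : v ∈ p.support := by
    by_contra hv
    exact (mem_Bst.mp ht).2 (Rtrans (Rsymm ⟨p, hv⟩) (mem_cls.mp hs))
  have h1 := SimpleGraph.dist_le (p.takeUntil v hv)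
  have h2 := SimpleGraph.dist_le (p.dropUntil v hv)
  have h3 : (p.takeUntil v hv).length + (p.dropUntil v hv).length = p.length := by
    rw [← SimpleGraph.Walk.length_append, SimpleGraph.Walk.take_spec]
  omega

lemma exists_nbr (hconn : G.Connected) {v x : V} (hx : x ≠ v) :
    ∃ u, G.Adj v u ∧ u ∈ cls G v x := by
  obtain ⟨w⟩ := hconn.preconnected v x
  obtain ⟨q, hq⟩ := w.toPath
  cases q with
  | nil => exact absurd rfl hx.symm
  | cons h q' =>
    refine ⟨_, h, mem_cls.mpr ⟨q', ?_⟩⟩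
    have hnd := hq.support_nodup
    rw [SimpleGraph.Walk.support_cons] at hnd
    exact (List.nodup_cons.mp hnd).1

lemma trdiff (hconn : G.Connected) {v x u : V} (hu : u ∈ cls G v x) (hadj : G.Adj v u) :
    (Tr G u : ℤ) - (Tr G v : ℤ) =
      ((Bst G v x).card : ℤ) +
        ∑ z ∈ (cls G v x).erase u, ((G.dist u z : ℤ) - (G.dist v z : ℤ)) := by
  have hTr : ∀ w : V, (Tr G w : ℤ) = ∑ z, (G.dist w z : ℤ) := by
    intro w; simp [Tr]
  have hsum : (Tr G u : ℤ) - (Tr G v : ℤ)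
      = ∑ z, ((G.dist u z : ℤ) - (G.dist v z : ℤ)) := by
    rw [hTr, hTr, Finset.sum_sub_distrib]
  have hduv : G.dist u v = 1 := SimpleGraph.dist_eq_one_iff_adj.mpr hadj.symm
  have hdvu : G.dist v u = 1 := SimpleGraph.dist_eq_one_iff_adj.mpr hadj
  have hB : ∀ z ∈ Bst G v x, ((G.dist u z : ℤ) - (G.dist v z : ℤ)) = 1 := by
    intro z hz
    have h := dist_split hconn hu hz
    rw [h, hduv]
    push_cast
    ring
  have hBsum : ∑ z ∈ Bst G v x, ((G.dist u z : ℤ) - (G.dist v z : ℤ))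
      = ((Bst G v x).card : ℤ) := by
    rw [Finset.sum_congr rfl hB, Finset.sum_const, nsmul_eq_mul, mul_one]
  have hA : ∑ z ∈ cls G v x, ((G.dist u z : ℤ) - (G.dist v z : ℤ))
      = -1 + ∑ z ∈ (cls G v x).erase u, ((G.dist u z : ℤ) - (G.dist v z : ℤ)) := by
    rw [← Finset.sum_erase_add _ _ hu, SimpleGraph.dist_self, hdvu]
    push_cast
    ring
  rw [hsum, sum_split v x, hBsum, hA, SimpleGraph.dist_self, hduv]
  push_cast
  ring

lemma dist_lb (hconn : G.Connected) {u v : V} (hadj : G.Adj v u) (z : V) :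
    (-1 : ℤ) ≤ (G.dist u z : ℤ) - (G.dist v z : ℤ) := by
  have h : G.dist v z ≤ G.dist v u + G.dist u z := hconn.dist_triangle
  have h1 : G.dist v u = 1 := SimpleGraph.dist_eq_one_iff_adj.mpr hadj
  omega

lemma Ylem (hconn : G.Connected) (hsti : IsKSTI G 2) {v x : V} (hx : x ≠ v) :
    (Bst G v x).card ≤ (cls G v x).card + 1 := by
  obtain ⟨u, hadj, hu⟩ := exists_nbr hconn hx
  have hE := trdiff hconn hu hadj
  have hlb : -((((cls G v x).erase u).card : ℤ))
      ≤ ∑ z ∈ (cls G v x).erase u, ((G.dist u z : ℤ) - (G.dist v z : ℤ)) := by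
    have h := Finset.sum_le_sum (fun z (_ : z ∈ (cls G v x).erase u) => dist_lb hconn hadj z)
    simpa using h
  have hce : ((cls G v x).erase u).card + 1 = (cls G v x).card := Finset.card_erase_add_one hu
  have hk := hsti v u hadj
  omega

lemma stay {v x u : V} (hnb : ∀ z, G.Adj v z → z ∈ cls G v x → z = u) :
    ∀ {s t : V} (p : G.Walk s t), u ∉ p.support → s ∈ cls G v x → s ≠ u →
      t ∈ cls G v x ∧ t ≠ u := by
  intro s t p
  induction p with
  | nil => exact fun _ hs hsu => ⟨hs, hsu⟩
  | @cons s m t h q ih =>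
    intro hup hs hsu
    have hmq : m ∈ q.support := q.start_mem_support
    have hmu : m ≠ u := by
      intro e
      exact hup (by rw [SimpleGraph.Walk.support_cons]; exact List.mem_cons_of_mem _ (e ▸ hmq))
    have hmv : m ≠ v := by
      rintro rfl
      exact hsu (hnb s h.symm hs)
    have hm : m ∈ cls G v x := mem_cls_of_adj hs h hmv
    refine ih ?_ hm hmu
    intro hq
    exact hup (by rw [SimpleGraph.Walk.support_cons]; exact List.mem_cons_of_mem _ hq)

lemma cls_subset {v x u : V} (hnb : ∀ z, G.Adj v z → z ∈ cls G v x → z = u)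
    {x' : V} (hx' : x' ∈ (cls G v x).erase u) :
    cls G u x' ⊆ (cls G v x).erase u := by
  intro z hz
  obtain ⟨p, hp⟩ := mem_cls.mp hz
  have hst := stay hnb p.reverse (by simpa using hp)
    (Finset.mem_erase.mp hx').2 (Finset.mem_erase.mp hx').1
  exact Finset.mem_erase.mpr ⟨hst.2, hst.1⟩

lemma omg (hconn : G.Connected) (hn : 5 ≤ Fintype.card V) (hsti : IsKSTI G 2)
    {v x : V} (hx : x ≠ v) (hab : (cls G v x).card ≤ (Bst G v x).card) : False := by
  obtain ⟨u, hadj, hu⟩ := exists_nbr hconn hx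
  have hY := Ylem hconn hsti hx
  have hE := trdiff hconn hu hadj
  have hcard := card_eq (G := G) v x
  have hce : ((cls G v x).erase u).card + 1 = (cls G v x).card := Finset.card_erase_add_one hu
  have hlb : -((((cls G v x).erase u).card : ℤ))
      ≤ ∑ z ∈ (cls G v x).erase u, ((G.dist u z : ℤ) - (G.dist v z : ℤ)) := by
    have h := Finset.sum_le_sum (fun z (_ : z ∈ (cls G v x).erase u) => dist_lb hconn hadj z)
    simpa using h
  have hk := hsti u v hadj.symm
  have hT2 : (Tr G u : ℤ) - (Tr G v : ℤ) = 2 := by omega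
  have hsum1 : ∑ z ∈ (cls G v x).erase u, ((G.dist u z : ℤ) - (G.dist v z : ℤ) + 1) ≤ 1 := by
    rw [Finset.sum_add_distrib, Finset.sum_const, nsmul_eq_mul, mul_one]
    omega
  by_cases hsec : ∃ u', u' ∈ (cls G v x).erase u ∧ G.Adj v u'
  · obtain ⟨u', hu'e, hadj'⟩ := hsec
    have hu'c : u' ∈ cls G v x := (Finset.mem_erase.mp hu'e).2
    have hne : u' ≠ u := (Finset.mem_erase.mp hu'e).1
    have hterm : (G.dist u u' : ℤ) - (G.dist v u' : ℤ) + 1 ≤ 1 := by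
      refine le_trans (Finset.single_le_sum
        (f := fun z => (G.dist u z : ℤ) - (G.dist v z : ℤ) + 1) (fun z _ => ?_) hu'e) hsum1
      show (0:ℤ) ≤ (G.dist u z : ℤ) - (G.dist v z : ℤ) + 1
      have := dist_lb hconn hadj z
      omega
    have hdvu' : G.dist v u' = 1 := SimpleGraph.dist_eq_one_iff_adj.mpr hadj'
    have hdne : G.dist u u' ≠ 0 := by
      intro h0
      exact hne.symm (hconn.dist_eq_zero_iff.mp h0)
    have hd1 : G.dist u u' = 1 := by omega
    have hadjuu' : G.Adj u u' := SimpleGraph.dist_eq_one_iff_adj.mp hd1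
    have hE' := trdiff hconn hu'c hadj'
    have hce' : ((cls G v x).erase u').card + 1 = (cls G v x).card :=
      Finset.card_erase_add_one hu'c
    have hlb' : -((((cls G v x).erase u').card : ℤ))
        ≤ ∑ z ∈ (cls G v x).erase u', ((G.dist u z : ℤ) - (G.dist v z : ℤ)) := by
      have h := Finset.sum_le_sum (fun z (_ : z ∈ (cls G v x).erase u') => dist_lb hconn hadj z)
      simpa using h
    have hlb'2 : -((((cls G v x).erase u').card : ℤ))
        ≤ ∑ z ∈ (cls G v x).erase u', ((G.dist u' z : ℤ) - (G.dist v z : ℤ)) := by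
      have h := Finset.sum_le_sum (fun z (_ : z ∈ (cls G v x).erase u') => dist_lb hconn hadj' z)
      simpa using h
    have hk' := hsti u' v hadj'.symm
    have hT2' : (Tr G u' : ℤ) - (Tr G v : ℤ) = 2 := by omega
    have hkk := hsti u u' hadjuu'
    omega
  · push_neg at hsec
    have hnb : ∀ z, G.Adj v z → z ∈ cls G v x → z = u := by
      intro z hz hzc
      by_contra hzu
      exact hsec z (Finset.mem_erase.mpr ⟨hzu, hzc⟩) hz
    by_cases ha1 : (cls G v x).card ≤ 1
    · omega
    · have hpos : 0 < ((cls G v x).erase u).card := by omega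
      obtain ⟨x', hx'⟩ := Finset.card_pos.mp hpos
      have hsub := cls_subset hnb hx'
      have hle : (cls G u x').card ≤ ((cls G v x).erase u).card := Finset.card_le_card hsub
      have hY' := Ylem hconn hsti (v := u) (x := x') (Finset.mem_erase.mp hx').1
      have hcard' := card_eq (G := G) u x'
      omega

lemma reach_induce {v : V} : ∀ {s t : V} (p : G.Walk s t), v ∉ p.support →
    ∀ (hs : s ∈ ({v}ᶜ : Set V)) (ht : t ∈ ({v}ᶜ : Set V)),
    (G.induce ({v}ᶜ : Set V)).Reachable ⟨s, hs⟩ ⟨t, ht⟩ := by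
  intro s t p
  induction p with
  | nil => exact fun _ _ _ => SimpleGraph.Reachable.refl _
  | @cons s m t h q ih =>
    intro hv hs ht
    have hmv : m ∈ ({v}ᶜ : Set V) := by
      simp only [Set.mem_compl_iff, Set.mem_singleton_iff]
      intro e
      apply hv
      rw [SimpleGraph.Walk.support_cons]
      exact List.mem_cons_of_mem _ (e ▸ q.start_mem_support)
    have hv' : v ∉ q.support := fun hq =>
      hv (by rw [SimpleGraph.Walk.support_cons]; exact List.mem_cons_of_mem _ hq)
    exact (SimpleGraph.Adj.reachable (by exact h :
      (G.induce ({v}ᶜ : Set V)).Adj ⟨s, hs⟩ ⟨m, hmv⟩)).trans (ih hv' hmv ht)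

end STIAux

theorem stmt_10 {V : Type*} [Fintype V] (G : SimpleGraph V)
    (hconn : G.Connected) (hn : 5 ≤ Fintype.card V) (hsti : IsKSTI G 2) :
    ∀ v : V, (G.induce ({v}ᶜ : Set V)).Connected := by
  intro v
  rw [SimpleGraph.connected_iff]
  constructor
  · intro a b
    by_contra hr
    have hav : (a : V) ≠ v := by
      intro e
      have h := a.2
      rw [e] at h
      simp at h
    have hbv : (b : V) ≠ v := by
      intro e
      have h := b.2
      rw [e] at h
      simp at h
    have hyx : ¬ STIAux.R G v (b : V) (a : V) := by
      rintro ⟨p, hp⟩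
      exact hr ((STIAux.reach_induce p hp b.2 a.2).symm)
    by_cases hcase : (STIAux.cls G v (a : V)).card ≤ (STIAux.Bst G v (a : V)).card
    · exact STIAux.omg hconn hn hsti hav hcase
    · push_neg at hcase
      have hsub : STIAux.cls G v (b : V) ⊆ STIAux.Bst G v (a : V) := by
        intro z hz
        have hzb := STIAux.mem_cls.mp hz
        refine STIAux.mem_Bst.mpr ⟨STIAux.Rne hzb, fun hzx => ?_⟩
        exact hyx (STIAux.Rtrans (STIAux.Rsymm hzb) hzx)
      have h1 : (STIAux.cls G v (b : V)).card ≤ (STIAux.Bst G v (a : V)).card :=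
        Finset.card_le_card hsub
      have h2 := STIAux.card_eq (G := G) v (a : V)
      have h3 := STIAux.card_eq (G := G) v (b : V)
      exact STIAux.omg hconn hn hsti hbv (by omega)
  · obtain ⟨w, hw⟩ := Fintype.exists_ne_of_one_lt_card (by omega) v
    exact ⟨⟨w, by simp [hw]⟩⟩
end

section
/- If G is a connected k-STI graph with at least one edge (k ≥ 1), then k ≤ n(G) − 2, where n(G) is the number of vertices of G. -/
theorem stmt_11 {V : Type*} [Fintype V] (G : SimpleGraph V) (hconn : G.Connected)
    (hedge : ∃ u v : V, G.Adj u v) (k : ℕ) (hk : 1 ≤ k) (hsti : IsKSTI G k) :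
    k ≤ Fintype.card V - 2 := by
  classical
  obtain ⟨u, v, huv⟩ := hedge
  have hne : u ≠ v := huv.ne
  have hd1 : G.dist u v = 1 := SimpleGraph.dist_eq_one_iff_adj.2 huv
  have hd1' : G.dist v u = 1 := SimpleGraph.dist_eq_one_iff_adj.2 huv.symm
  set f : V → ℤ := fun x => (G.dist u x : ℤ) - G.dist v x with hf
  have hsum : (Tr G u : ℤ) - Tr G v = ∑ x : V, f x := by
    simp [Tr, Finset.sum_sub_distrib, hf]
  have hfu : f u = -1 := by simp [hf, hd1', SimpleGraph.dist_self]
  have hfv : f v = 1 := by simp [hf, hd1, SimpleGraph.dist_self]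
  set s : Finset V := (Finset.univ.erase u).erase v with hs
  have hvmem : v ∈ Finset.univ.erase u := Finset.mem_erase.2 ⟨hne.symm, Finset.mem_univ v⟩
  have hsplit : ∑ x : V, f x = f u + (f v + ∑ x ∈ s, f x) := by
    rw [← Finset.add_sum_erase _ f (Finset.mem_univ u), ← Finset.add_sum_erase _ f hvmem]
  have hcard : s.card = Fintype.card V - 2 := by
    rw [hs, Finset.card_erase_of_mem hvmem, Finset.card_erase_of_mem (Finset.mem_univ u),
      Finset.card_univ]
    omega
  have hbound : ∀ x : V, |f x| ≤ 1 := by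
    intro x
    have h1 := hconn.dist_triangle (u := u) (v := v) (w := x)
    have h2 := hconn.dist_triangle (u := v) (v := u) (w := x)
    rw [hd1] at h1
    rw [hd1'] at h2
    rw [abs_le]
    constructor <;> [skip; skip] <;> push_cast [hf] <;> omega
  have habs : |∑ x ∈ s, f x| ≤ (Fintype.card V - 2 : ℕ) := by
    calc |∑ x ∈ s, f x| ≤ ∑ x ∈ s, |f x| := Finset.abs_sum_le_sum_abs _ _
    _ ≤ ∑ _x ∈ s, (1 : ℤ) := Finset.sum_le_sum fun x _ => hbound x
    _ = s.card := by simp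
    _ = (Fintype.card V - 2 : ℕ) := by rw [hcard]
  have hk' := hsti u v huv
  rw [← hk', hsum, hsplit, hfu, hfv]
  have : (-1 : ℤ) + (1 + ∑ x ∈ s, f x) = ∑ x ∈ s, f x := by ring
  rw [this]
  rw [Int.abs_eq_natAbs] at habs
  omega
end

section
/- A connected k-STI graph G with at least one edge satisfies k = n(G) − 2 if and only if G is isomorphic to the star K_{1,k+1}. -/
section Aux

variable {V : Type*} [Fintype V] [DecidableEq V] {G : SimpleGraph V}

/-- If the transmission difference over an edge equals `n - 2` with the right sign,
then `u` is a leaf with unique neighbor `v`. -/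
lemma leaf_of_sum_eq (hconn : G.Connected) {u v : V} (huv : G.Adj u v)
    (hsum : ∑ x ∈ (Finset.univ \ {u, v}), ((G.dist u x : ℤ) - (G.dist v x : ℤ))
      = ((Finset.univ \ ({u, v} : Finset V)).card : ℤ)) :
    ∀ x, G.Adj u x → x = v := by
  classical
  set s : Finset V := Finset.univ \ {u, v} with hs
  have hone : ∀ x ∈ s, ((G.dist u x : ℤ) - (G.dist v x : ℤ)) = 1 := by
    have hle : ∀ x ∈ s, (0 : ℤ) ≤ 1 - ((G.dist u x : ℤ) - (G.dist v x : ℤ)) := by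
      intro x _
      have htri : G.dist u x ≤ G.dist u v + G.dist v x := hconn.dist_triangle
      have hd1 : G.dist u v = 1 := SimpleGraph.dist_eq_one_iff_adj.mpr huv
      omega
    have hzero : ∑ x ∈ s, (1 - ((G.dist u x : ℤ) - (G.dist v x : ℤ))) = 0 := by
      rw [Finset.sum_sub_distrib, hsum]
      simp
    intro x hx
    have := (Finset.sum_eq_zero_iff_of_nonneg hle).mp hzero x hx
    omega
  intro x hx
  by_contra hxv
  have hxu : x ≠ u := fun h => G.irrefl (h ▸ hx)
  have hxs : x ∈ s := by
    simp [hs, Finset.mem_sdiff, hxu, hxv]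
  have hdux : G.dist u x = 1 := SimpleGraph.dist_eq_one_iff_adj.mpr hx
  have := hone x hxs
  have hdvx : G.dist v x = 0 := by omega
  exact hxv ((hconn.dist_eq_zero_iff.mp hdvx).symm)

/-- Every edge of a `(n-2)`-STI graph has a leaf endpoint. -/
lemma edge_leaf (hconn : G.Connected) {k : ℕ} (hsti : IsKSTI G k)
    (hcard : (k : ℤ) = (Fintype.card V : ℤ) - 2) {u v : V} (huv : G.Adj u v) :
    (∀ x, G.Adj u x → x = v) ∨ (∀ x, G.Adj v x → x = u) := by
  classical
  have hTr : ((Tr G u : ℤ) - (Tr G v : ℤ)) = ∑ x : V,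
      ((G.dist u x : ℤ) - (G.dist v x : ℤ)) := by
    rw [Finset.sum_sub_distrib]
    simp [Tr]
  have hsplit : ∑ x : V, ((G.dist u x : ℤ) - (G.dist v x : ℤ))
      = ∑ x ∈ (Finset.univ \ {u, v}), ((G.dist u x : ℤ) - (G.dist v x : ℤ)) := by
    rw [← Finset.sum_sdiff (Finset.subset_univ ({u, v} : Finset V))]
    have hpair : ∑ x ∈ ({u, v} : Finset V), ((G.dist u x : ℤ) - (G.dist v x : ℤ)) = 0 := by
      rw [Finset.sum_pair huv.ne]
      have h1 : G.dist u u = 0 := by simp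
      have h2 : G.dist v v = 0 := by simp
      have h3 : G.dist u v = 1 := SimpleGraph.dist_eq_one_iff_adj.mpr huv
      have h4 : G.dist v u = 1 := SimpleGraph.dist_eq_one_iff_adj.mpr huv.symm
      rw [h1, h2, h3, h4]; ring
    rw [hpair]; ring
  have hcards : ((Finset.univ \ ({u, v} : Finset V)).card : ℤ)
      = (Fintype.card V : ℤ) - 2 := by
    rw [Finset.card_sdiff_of_subset (Finset.subset_univ _), Finset.card_pair huv.ne]
    have : 2 ≤ Fintype.card V := by
      have := Finset.card_le_card (Finset.subset_univ ({u, v} : Finset V))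
      rw [Finset.card_pair huv.ne] at this
      simpa using this
    push_cast [Finset.card_univ]
    omega
  have habs := hsti u v huv
  rcases Int.natAbs_eq_iff.mp habs with h | h
  · left
    apply leaf_of_sum_eq hconn huv
    rw [← hsplit, ← hTr, h, hcards, hcard]
  · right
    apply leaf_of_sum_eq hconn huv.symm
    have hswap : ∑ x ∈ (Finset.univ \ {v, u}), ((G.dist v x : ℤ) - (G.dist u x : ℤ))
        = - ∑ x ∈ (Finset.univ \ {u, v}), ((G.dist u x : ℤ) - (G.dist v x : ℤ)) := by
      rw [Finset.pair_comm v u, ← Finset.sum_neg_distrib]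
      exact Finset.sum_congr rfl fun x _ => by ring
    rw [hswap, ← hsplit, ← hTr, h]
    rw [Finset.pair_comm v u, hcards, hcard]
    ring
end Aux
section Star

variable {V : Type*} {G : SimpleGraph V}

/-- From any vertex other than `u₀, v₀` we can find a neighbor of `v₀` other than `u₀`. -/
lemma find_nbr {u₀ : V} :
    ∀ {x v₀ : V}, G.Walk x v₀ → (∀ y, G.Adj u₀ y → y = v₀) → x ≠ u₀ → x ≠ v₀ →
      ∃ y, y ≠ u₀ ∧ G.Adj v₀ y := by
  intro x v₀ p
  induction p with
  | nil => exact fun _ _ h => absurd rfl h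
  | @cons a b c h q ih =>
    intro hleaf hxu hxv
    by_cases hbv : b = c
    · subst hbv; exact ⟨a, hxu, h.symm⟩
    by_cases hbu : b = u₀
    · subst hbu
      exact absurd (hleaf a h.symm) hxv
    exact ih hleaf hbu hbv

lemma star_reach {v₀ : V} (hleafall : ∀ w, G.Adj v₀ w → ∀ x, G.Adj w x → x = v₀) :
    ∀ {a b : V}, G.Walk a b → (a = v₀ ∨ G.Adj v₀ a) → (b = v₀ ∨ G.Adj v₀ b) := by
  intro a b p
  induction p with
  | nil => exact id
  | @cons a c b h q ih =>
    intro hab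
    apply ih
    rcases hab with rfl | ha
    · exact Or.inr h
    · exact Or.inl (hleafall a ha c h)

end Star

theorem stmt_12 {V : Type*} [Fintype V] (G : SimpleGraph V) (hconn : G.Connected)
    (hedge : ∃ u v : V, G.Adj u v) (k : ℕ) (hk : 1 ≤ k) (hsti : IsKSTI G k) :
    k = Fintype.card V - 2 ↔
      Nonempty (G ≃g completeBipartiteGraph (Fin 1) (Fin (k + 1))) := by
  classical
  obtain ⟨u, v, huv⟩ := hedge
  have hn2 : 2 ≤ Fintype.card V := Fintype.one_lt_card_iff_nontrivial.mpr ⟨u, v, huv.ne⟩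
  constructor
  · intro hkn
    have hn : Fintype.card V = k + 2 := by omega
    have hcardZ : (k : ℤ) = (Fintype.card V : ℤ) - 2 := by push_cast [hn]; ring
    -- get a leaf edge
    obtain ⟨u₀, v₀, hadj, hleaf⟩ : ∃ a b, G.Adj a b ∧ ∀ x, G.Adj a x → x = b := by
      rcases edge_leaf hconn hsti hcardZ huv with h | h
      · exact ⟨u, v, huv, h⟩
      · exact ⟨v, u, huv.symm, h⟩
    -- a third vertex exists
    obtain ⟨w, hwu, hwv⟩ : ∃ w : V, w ≠ u₀ ∧ w ≠ v₀ := by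
      by_contra hw
      push_neg at hw
      have hsub : (Finset.univ : Finset V) ⊆ {u₀, v₀} := by
        intro x _
        rcases eq_or_ne x u₀ with rfl | hx
        · simp
        · simp [hw x hx]
      have h2 := (Finset.card_le_card hsub).trans (Finset.card_insert_le _ _)
      simp at h2
      omega
    -- hence v₀ has a neighbor other than u₀
    obtain ⟨w', hw'u, hw'adj⟩ :=
      find_nbr ((hconn.preconnected w v₀).some) hleaf hwu hwv
    -- every neighbor of v₀ is a leaf
    have hleafall : ∀ a, G.Adj v₀ a → ∀ x, G.Adj a x → x = v₀ := by
      intro a ha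
      rcases edge_leaf hconn hsti hcardZ ha with h | h
      · exact absurd ((h u₀ hadj.symm).trans (h w' hw'adj).symm) (Ne.symm hw'u)
      · exact h
    have hall : ∀ b, b = v₀ ∨ G.Adj v₀ b := fun b =>
      star_reach hleafall ((hconn.preconnected v₀ b).some) (Or.inl rfl)
    have hstar : ∀ a b : V, G.Adj a b ↔ (a = v₀ ∧ ¬b = v₀ ∨ b = v₀ ∧ ¬a = v₀) := by
      intro a b
      constructor
      · intro hab
        rcases eq_or_ne a v₀ with rfl | ha
        · exact Or.inl ⟨rfl, fun h => G.irrefl (h ▸ hab)⟩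
        · rcases hall a with h | h
          · exact absurd h ha
          · exact Or.inr ⟨hleafall a h b hab, ha⟩
      · rintro (⟨rfl, hb⟩ | ⟨rfl, ha⟩)
        · rcases hall b with h | h
          · exact absurd h hb
          · exact h
        · rcases hall a with h | h
          · exact absurd h ha
          · exact h.symm
    -- build the isomorphism
    have hcv : Fintype.card {x : V // ¬x = v₀} = k + 1 := by
      have h1 := Fintype.card_subtype_compl (fun x : V => x = v₀)
      rw [Fintype.card_subtype_eq] at h1
      omega
    let e₁ : {x : V // x = v₀} ≃ Fin 1 := Fintype.equivFinOfCardEq (Fintype.card_subtype_eq v₀)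
    let e₂ : {x : V // ¬x = v₀} ≃ Fin (k + 1) := Fintype.equivFinOfCardEq hcv
    let e : V ≃ (Fin 1 ⊕ Fin (k + 1)) :=
      (Equiv.sumCompl (· = v₀)).symm.trans (Equiv.sumCongr e₁ e₂)
    refine ⟨⟨e, ?_⟩⟩
    intro a b
    show (completeBipartiteGraph (Fin 1) (Fin (k + 1))).Adj (e a) (e b) ↔ G.Adj a b
    rcases eq_or_ne a v₀ with ha | ha <;> rcases eq_or_ne b v₀ with hb | hb <;>
      simp [e, Equiv.sumCompl, completeBipartiteGraph, hstar, ha, hb]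
  · rintro ⟨e⟩
    have hc : Fintype.card V = Fintype.card (Fin 1 ⊕ Fin (k + 1)) :=
      Fintype.card_congr e.toEquiv
    simp [Fintype.card_sum] at hc
    omega
end

section
/- A connected k-STI graph G of order n ≥ 5 has diameter 2 if and only if G is isomorphic to the complete bipartite graph K_{(n+k)/2, (n−k)/2}. -/
open SimpleGraph Finset

private lemma enat_eq_two {x : ℕ∞} (h2 : x ≤ 2) (h0 : x ≠ 0) (h1 : x ≠ 1) : x = 2 := by
  lift x to ℕ using ne_top_of_le_ne_top (by simp) h2
  norm_cast at h2 h0 h1 ⊢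
  omega

section Aux

variable {V : Type*} [Fintype V] [DecidableEq V] {G : SimpleGraph V}

private lemma exists_edge (hconn : G.Connected) (hnt : Nontrivial V) :
    ∃ x y : V, G.Adj x y := by
  obtain ⟨u, v, huv⟩ := hnt
  obtain ⟨p⟩ := hconn.preconnected u v
  cases p with
  | nil => exact absurd rfl huv
  | cons h _ => exact ⟨_, _, h⟩

private lemma exists_common (hconn : G.Connected) (hd2 : ∀ u v : V, G.dist u v ≤ 2)
    {x y : V} (hne : x ≠ y) (hna : ¬ G.Adj x y) : ∃ z, G.Adj x z ∧ G.Adj z y := by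
  have h0 : G.dist x y ≠ 0 := by
    rw [SimpleGraph.dist_ne_zero_iff_ne_and_reachable]
    exact ⟨hne, hconn.preconnected x y⟩
  have h1 : G.dist x y ≠ 1 := fun h => hna (SimpleGraph.dist_eq_one_iff_adj.mp h)
  have h2 : G.dist x y = 2 := by have := hd2 x y; omega
  obtain ⟨p, hp⟩ := (hconn.preconnected x y).exists_walk_length_eq_dist
  rw [h2] at hp
  refine ⟨p.getVert 1, ?_, ?_⟩
  · have := p.adj_getVert_succ (i := 0) (by omega)
    simpa [SimpleGraph.Walk.getVert_zero] using this
  · have h := p.adj_getVert_succ (i := 1) (by omega)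
    have hy : p.getVert 2 = y := by
      have h' := p.getVert_length
      rwa [hp] at h'
    rwa [hy] at h

variable [DecidableRel G.Adj]

private lemma tr_formula (hconn : G.Connected) (hd2 : ∀ u v : V, G.dist u v ≤ 2) (u : V) :
    (Tr G u : ℤ) = 2 * Fintype.card V - 2 - G.degree u := by
  have hdist : ∀ x : V, (G.dist u x : ℤ) =
      2 - (if x = u then 2 else 0) - (if G.Adj u x then 1 else 0) := by
    intro x
    by_cases hx : x = u
    · subst hx; simp [G.irrefl]
    · by_cases ha : G.Adj u x
      · have h1 : G.dist u x = 1 := SimpleGraph.dist_eq_one_iff_adj.mpr ha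
        simp [hx, ha, h1]
      · have h0 : G.dist u x ≠ 0 := by
          rw [SimpleGraph.dist_ne_zero_iff_ne_and_reachable]
          exact ⟨fun h => hx h.symm, hconn.preconnected u x⟩
        have h1 : G.dist u x ≠ 1 := fun h => ha (SimpleGraph.dist_eq_one_iff_adj.mp h)
        have h2' := hd2 u x
        have h2 : G.dist u x = 2 := by omega
        simp [hx, ha, h2]
  have hT : (Tr G u : ℤ) = ∑ x : V, (G.dist u x : ℤ) := by
    unfold Tr; push_cast; rfl
  rw [hT, Finset.sum_congr rfl (fun x _ => hdist x), Finset.sum_sub_distrib,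
    Finset.sum_sub_distrib]
  have h1 : ∑ _x : V, (2 : ℤ) = 2 * Fintype.card V := by
    simp [mul_comm]
  have h2 : ∑ x : V, (if x = u then (2 : ℤ) else 0) = 2 := by
    simp [Finset.sum_ite_eq']
  have h3 : ∑ x : V, (if G.Adj u x then (1 : ℤ) else 0) = G.degree u := by
    rw [Finset.sum_boole]
    congr 1
    rw [← SimpleGraph.card_neighborFinset_eq_degree, SimpleGraph.neighborFinset_eq_filter]
  rw [h1, h2, h3]

private lemma deg_dvd {k : ℕ}
    (hdeg : ∀ x y : V, G.Adj x y → ((G.degree x : ℤ) - G.degree y).natAbs = k)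
    {x y : V} (p : G.Walk x y) : (k : ℤ) ∣ ((G.degree x : ℤ) - G.degree y) := by
  induction p with
  | nil => simp
  | @cons a b c h p ih =>
    have h1 : ((G.degree a : ℤ) - G.degree b).natAbs = k := hdeg a b h
    have h2 : (k : ℤ) ∣ ((G.degree a : ℤ) - G.degree b) := by
      rcases Int.natAbs_eq_iff.mp h1 with h' | h' <;> rw [h'] <;> simp
    have heq : (G.degree a : ℤ) - G.degree c =
        ((G.degree a : ℤ) - G.degree b) + ((G.degree b : ℤ) - G.degree c) := by ring
    rw [heq]
    exact dvd_add h2 ih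

end Aux

theorem stmt_16 {V : Type*} [Fintype V] (G : SimpleGraph V) (hconn : G.Connected)
    (hn : 5 ≤ Fintype.card V) (k : ℕ) (hk : 1 ≤ k) (hsti : IsKSTI G k) :
    G.diam = 2 ↔
      Nonempty (G ≃g completeBipartiteGraph
        (Fin ((Fintype.card V + k) / 2)) (Fin ((Fintype.card V - k) / 2))) := by
  classical
  have hnt : Nontrivial V := Fintype.one_lt_card_iff_nontrivial.mp (by omega)
  have zfact1 : ∀ a b d : ZMod 2, a ≠ d → d ≠ b → a = b := by decide
  have zfact2 : ∀ a b r : ZMod 2, a ≠ r → b ≠ r → a = b := by decide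
  constructor
  · intro hdiam
    letI : DecidableEq V := Classical.decEq V
    letI : DecidableRel G.Adj := Classical.decRel _
    have hediam : G.ediam ≠ ⊤ :=
      SimpleGraph.ediam_ne_top_of_diam_ne_zero (by omega)
    have hd2 : ∀ u v : V, G.dist u v ≤ 2 := fun u v =>
      hdiam ▸ SimpleGraph.dist_le_diam hediam
    have hdeg : ∀ x y : V, G.Adj x y → ((G.degree x : ℤ) - G.degree y).natAbs = k := by
      intro x y h
      have hx := tr_formula hconn hd2 x
      have hy := tr_formula hconn hd2 y
      have hst := hsti x y h
      have heq : (Tr G x : ℤ) - Tr G y = (G.degree y : ℤ) - G.degree x := by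
        rw [hx, hy]; ring
      rw [heq] at hst
      omega
    obtain ⟨a0, b0, hab⟩ := exists_edge hconn hnt
    obtain ⟨x0, y0, hxy, hge⟩ : ∃ x0 y0 : V, G.Adj x0 y0 ∧ G.degree y0 ≤ G.degree x0 := by
      rcases le_total (G.degree a0) (G.degree b0) with h | h
      · exact ⟨b0, a0, hab.symm, h⟩
      · exact ⟨a0, b0, hab, h⟩
    have hk' : (G.degree x0 : ℤ) - G.degree y0 = k := by
      have := hdeg x0 y0 hxy; omega
    set c : V → ZMod 2 :=
      fun w => ((((G.degree w : ℤ) - G.degree y0) / k : ℤ) : ZMod 2) with hc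
    have hdvd : ∀ w : V, (k : ℤ) ∣ ((G.degree w : ℤ) - G.degree y0) := by
      intro w
      obtain ⟨p⟩ := hconn.preconnected w y0
      exact deg_dvd hdeg p
    have hkne : (k : ℤ) ≠ 0 := by exact_mod_cast (by omega : k ≠ 0)
    have hadj_c : ∀ x y : V, G.Adj x y → c x ≠ c y := by
      intro x y h
      obtain ⟨p, hp⟩ := hdvd x
      obtain ⟨q, hq⟩ := hdvd y
      have hpq : p - q = 1 ∨ p - q = -1 := by
        have h1 := hdeg x y h
        have h2 : (G.degree x : ℤ) - G.degree y = (k : ℤ) * (p - q) := by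
          rw [mul_sub, ← hp, ← hq]; ring
        rcases Int.natAbs_eq_iff.mp h1 with h' | h'
        · left
          have hmul : (k : ℤ) * (p - q) = (k : ℤ) * 1 := by rw [← h2, h']; ring
          exact mul_left_cancel₀ hkne hmul
        · right
          have hmul : (k : ℤ) * (p - q) = (k : ℤ) * (-1) := by rw [← h2, h']; ring
          exact mul_left_cancel₀ hkne hmul
      have hcx : c x = ((p : ℤ) : ZMod 2) := by
        simp only [hc, hp, Int.mul_ediv_cancel_left _ hkne]
      have hcy : c y = ((q : ℤ) : ZMod 2) := by
        simp only [hc, hq, Int.mul_ediv_cancel_left _ hkne]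
      have hsub : c x - c y = (((p - q : ℤ)) : ZMod 2) := by
        rw [hcx, hcy]; push_cast; ring
      have hone : c x - c y = 1 := by
        rw [hsub]
        rcases hpq with h' | h'
        · rw [h']; exact Int.cast_one
        · rw [h']; push_cast; decide
      intro heq
      rw [heq, sub_self] at hone
      exact absurd hone (by decide)
    have hcadj : ∀ x y : V, G.Adj x y ↔ c x ≠ c y := by
      intro x y
      refine ⟨hadj_c x y, fun hne => ?_⟩
      have hxyne : x ≠ y := fun h => hne (by rw [h])
      by_contra hna
      obtain ⟨z, hz1, hz2⟩ := exists_common hconn hd2 hxyne hna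
      exact hne (zfact1 _ _ _ (hadj_c _ _ hz1) (hadj_c _ _ hz2))
    have hcx0y0 : c x0 ≠ c y0 := hadj_c _ _ hxy
    have hNx0 : G.neighborFinset x0 = univ.filter (fun w => c w = c y0) := by
      ext w
      simp only [SimpleGraph.mem_neighborFinset, Finset.mem_filter, Finset.mem_univ, true_and]
      rw [hcadj]
      revert hcx0y0
      generalize c x0 = a
      generalize c y0 = b
      generalize c w = d
      revert a b d
      decide
    have hNy0 : G.neighborFinset y0 = univ.filter (fun w => ¬ c w = c y0) := by
      ext w
      simp only [SimpleGraph.mem_neighborFinset, Finset.mem_filter, Finset.mem_univ, true_and]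
      rw [hcadj]
      exact ne_comm
    have hsum : (univ.filter (fun w => c w = c y0)).card
        + (univ.filter (fun w => ¬ c w = c y0)).card = Fintype.card V := by
      rw [← Finset.card_univ]
      exact Finset.card_filter_add_card_filter_not _
    have hdx0 : G.degree x0 = (univ.filter (fun w => c w = c y0)).card := by
      rw [← SimpleGraph.card_neighborFinset_eq_degree, hNx0]
    have hdy0 : G.degree y0 = (univ.filter (fun w => ¬ c w = c y0)).card := by
      rw [← SimpleGraph.card_neighborFinset_eq_degree, hNy0]
    have e1card : Fintype.card {w : V // c w = c y0} = (Fintype.card V + k) / 2 := by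
      rw [Fintype.card_subtype]
      omega
    have e2card : Fintype.card {w : V // ¬ c w = c y0} = (Fintype.card V - k) / 2 := by
      rw [Fintype.card_subtype]
      omega
    let e1 := Fintype.equivFinOfCardEq e1card
    let e2 := Fintype.equivFinOfCardEq e2card
    let eqv : V ≃ (Fin ((Fintype.card V + k) / 2) ⊕ Fin ((Fintype.card V - k) / 2)) :=
      (Equiv.sumCompl (fun w => c w = c y0)).symm.trans (Equiv.sumCongr e1 e2)
    have happ1 : ∀ (w : V) (h : c w = c y0), eqv w = Sum.inl (e1 ⟨w, h⟩) := by
      intro w h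
      show Sum.map (⇑e1) (⇑e2) ((Equiv.sumCompl fun w => c w = c y0).symm w) = _
      rw [Equiv.sumCompl_symm_apply_of_pos (p := fun w => c w = c y0) h]
      rfl
    have happ2 : ∀ (w : V) (h : ¬ c w = c y0), eqv w = Sum.inr (e2 ⟨w, h⟩) := by
      intro w h
      show Sum.map (⇑e1) (⇑e2) ((Equiv.sumCompl fun w => c w = c y0).symm w) = _
      rw [Equiv.sumCompl_symm_apply_of_neg (p := fun w => c w = c y0) h]
      rfl
    refine ⟨⟨eqv, @fun u v => ?_⟩⟩
    rw [hcadj]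
    by_cases hu : c u = c y0 <;> by_cases hv : c v = c y0
    · rw [happ1 u hu, happ1 v hv]
      simp [completeBipartiteGraph, hu, hv]
    · rw [happ1 u hu, happ2 v hv]
      simp only [completeBipartiteGraph]
      constructor
      · intro _ heq
        exact hv (heq.symm.trans hu)
      · intro _
        simp
    · rw [happ2 u hu, happ1 v hv]
      simp only [completeBipartiteGraph]
      constructor
      · intro _ heq
        exact hu (heq.trans hv)
      · intro _
        simp
    · rw [happ2 u hu, happ2 v hv]
      simp [completeBipartiteGraph, zfact2 _ _ _ hu hv]
  · rintro ⟨e⟩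
    set P : V → Bool := fun u => (e u).isLeft with hP'
    have hP : ∀ u v : V, G.Adj u v ↔ P u ≠ P v := by
      intro u v
      rw [← e.map_adj_iff]
      simp only [hP']
      cases h1 : e u <;> cases h2 : e v <;>
        simp [completeBipartiteGraph, h1, h2]
    obtain ⟨x0, y0, hxy⟩ := exists_edge hconn hnt
    have hPxy : P x0 ≠ P y0 := (hP _ _).mp hxy
    have hnb : ∀ u : V, ∃ w, G.Adj u w := by
      intro u
      by_cases h : P u = P x0
      · exact ⟨y0, (hP _ _).mpr (h ▸ hPxy)⟩
      · exact ⟨x0, (hP _ _).mpr h⟩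
    have hd2' : ∀ u v : V, G.edist u v ≤ 2 := by
      intro u v
      by_cases huv : u = v
      · subst huv; simp
      by_cases hadj : G.Adj u v
      · exact le_trans (le_of_eq (SimpleGraph.edist_eq_one_iff_adj.mpr hadj)) one_le_two
      · have hPu : P u = P v := by
          by_contra h; exact hadj ((hP u v).mpr h)
        obtain ⟨w, hw⟩ := hnb u
        have hwv : G.Adj w v := by
          refine (hP w v).mpr fun h => ?_
          exact (hP u w).mp hw (hPu.trans h.symm)
        have h := SimpleGraph.edist_le
          (SimpleGraph.Walk.cons hw (SimpleGraph.Walk.cons hwv SimpleGraph.Walk.nil))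
        simpa using h
    have hcard : Fintype.card Bool < Fintype.card V := by
      simp only [Fintype.card_bool]; omega
    obtain ⟨u, v, hne, hPeq⟩ := Fintype.exists_ne_map_eq_of_card_lt P hcard
    have hna : ¬ G.Adj u v := fun h => (hP u v).mp h hPeq
    have huv2 : G.edist u v = 2 :=
      enat_eq_two (hd2' u v) (fun h => hne (SimpleGraph.edist_eq_zero_iff.mp h))
        (fun h => hna (SimpleGraph.edist_eq_one_iff_adj.mp h))
    have hediam : G.ediam = 2 :=
      le_antisymm (SimpleGraph.ediam_le_of_edist_le hd2') (huv2 ▸ SimpleGraph.edist_le_ediam)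
    rw [SimpleGraph.diam, hediam]
    rfl
end

section
/- Let G and H be connected graphs of the same order n, and let k ≥ 1. Then the Cartesian product G□H is an (nk)-STI graph if and only if both G and H are k-STI graphs. -/
open SimpleGraph

lemma walk_lower {α β : Type*} {G : SimpleGraph α} {H : SimpleGraph β}
    (hG : G.Connected) (hH : H.Connected) :
    ∀ {p q : α × β} (w : (G.boxProd H).Walk p q),
      G.dist p.1 q.1 + H.dist p.2 q.2 ≤ w.length := by
  intro p q w
  induction w with
  | nil => simp
  | cons h w ih =>
    rename_i u v x
    rcases boxProd_adj.mp h with ⟨ha, hb⟩ | ⟨hb, ha⟩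
    -- case 1: ha : G.Adj, hb : eq; case 2: hb : eq? check
    · have h1 : G.dist u.1 x.1 ≤ 1 + G.dist v.1 x.1 := by
        calc G.dist u.1 x.1 ≤ G.dist u.1 v.1 + G.dist v.1 x.1 := hG.dist_triangle
        _ ≤ 1 + G.dist v.1 x.1 := by
            have := SimpleGraph.dist_eq_one_iff_adj.mpr ha
            omega
      have h2 : H.dist u.2 x.2 = H.dist v.2 x.2 := by rw [hb]
      simp only [Walk.length_cons]
      omega
    · have h1 : H.dist u.2 x.2 ≤ 1 + H.dist v.2 x.2 := by
        calc H.dist u.2 x.2 ≤ H.dist u.2 v.2 + H.dist v.2 x.2 := hH.dist_triangle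
        _ ≤ 1 + H.dist v.2 x.2 := by
            have := SimpleGraph.dist_eq_one_iff_adj.mpr hb
            omega
      have h2 : G.dist u.1 x.1 = G.dist v.1 x.1 := by rw [ha]
      simp only [Walk.length_cons]
      omega

lemma boxProd_dist {α β : Type*} {G : SimpleGraph α} {H : SimpleGraph β}
    (hG : G.Connected) (hH : H.Connected) (a x : α) (b y : β) :
    (G.boxProd H).dist (a, b) (x, y) = G.dist a x + H.dist b y := by
  apply le_antisymm
  · obtain ⟨p, hp⟩ := hG.exists_walk_length_eq_dist a x
    obtain ⟨q, hq⟩ := hH.exists_walk_length_eq_dist b y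
    have := SimpleGraph.dist_le ((p.boxProdLeft H b).append (q.boxProdRight G x))
    have hl : (p.boxProdLeft H b).length = p.length := Walk.length_map _ _
    have hr : (q.boxProdRight G x).length = q.length := Walk.length_map _ _
    rw [Walk.length_append, hl, hr, hp, hq] at this
    exact this
  · obtain ⟨w, hw⟩ := (hG.boxProd hH).exists_walk_length_eq_dist (a, b) (x, y)
    have := walk_lower hG hH w
    simp only at this
    omega

lemma Tr_boxProd {α β : Type*} [Fintype α] [Fintype β] {G : SimpleGraph α} {H : SimpleGraph β}
    (hG : G.Connected) (hH : H.Connected) (a : α) (b : β) :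
    Tr (G.boxProd H) (a, b) = Fintype.card β * Tr G a + Fintype.card α * Tr H b := by
  unfold Tr
  have : ∀ x : α × β, (G.boxProd H).dist (a, b) x = G.dist a x.1 + H.dist b x.2 := fun x =>
    boxProd_dist hG hH a x.1 b x.2
  simp only [this]
  rw [Fintype.sum_prod_type]
  simp [Finset.sum_add_distrib, Finset.mul_sum, Finset.sum_comm, mul_comm,
    Finset.card_univ]

theorem stmt_18 {α β : Type*} [Fintype α] [Fintype β]
    (G : SimpleGraph α) (H : SimpleGraph β)
    (hG : G.Connected) (hH : H.Connected)
    (n : ℕ) (hcard : Fintype.card α = n) (hcard' : Fintype.card β = n)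
    (k : ℕ) (hk : 1 ≤ k) :
    IsKSTI (G.boxProd H) (n * k) ↔ IsKSTI G k ∧ IsKSTI H k := by
  have hnα : Nonempty α := hG.nonempty
  have hnβ : Nonempty β := hH.nonempty
  have hn : 0 < n := hcard ▸ Fintype.card_pos
  have key : ∀ (a x : α) (b y : β),
      ((Tr (G.boxProd H) (a, b) : ℤ) - Tr (G.boxProd H) (x, y)) =
        n * ((Tr G a : ℤ) - Tr G x) + n * ((Tr H b : ℤ) - Tr H y) := by
    intro a x b y
    rw [Tr_boxProd hG hH, Tr_boxProd hG hH, hcard, hcard']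
    push_cast
    ring
  constructor
  · intro h
    constructor
    · intro u v huv
      obtain ⟨b⟩ := hnβ
      have hadj : (G.boxProd H).Adj (u, b) (v, b) := boxProd_adj.mpr (Or.inl ⟨huv, rfl⟩)
      have h2 := h _ _ hadj
      rw [key] at h2
      simp only [sub_self, mul_zero, add_zero] at h2
      rw [Int.natAbs_mul, Int.natAbs_natCast] at h2
      exact Nat.eq_of_mul_eq_mul_left hn h2
    · intro u v huv
      obtain ⟨a⟩ := hnα
      have hadj : (G.boxProd H).Adj (a, u) (a, v) := boxProd_adj.mpr (Or.inr ⟨huv, rfl⟩)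
      have h2 := h _ _ hadj
      rw [key] at h2
      simp only [sub_self, mul_zero, zero_add] at h2
      rw [Int.natAbs_mul, Int.natAbs_natCast] at h2
      exact Nat.eq_of_mul_eq_mul_left hn h2
  · rintro ⟨h1, h2⟩ ⟨a, b⟩ ⟨x, y⟩ hadj
    rcases boxProd_adj.mp hadj with ⟨ha, hb⟩ | ⟨hb, ha⟩
    · subst hb
      rw [key]
      simp only [sub_self, mul_zero, add_zero]
      rw [Int.natAbs_mul, Int.natAbs_natCast, h1 _ _ ha]
    · subst ha
      rw [key]
      simp only [sub_self, mul_zero, zero_add]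
      rw [Int.natAbs_mul, Int.natAbs_natCast, h2 _ _ hb]
end

section
/- Let G be a connected bipartite transmission-regular graph of order n, u a vertex of G, and r ≥ 2. The graph rG(u), obtained from r disjoint copies of G by identifying the copies of u into a single vertex, is a ((r−1)(n−1))-STI graph. -/
/-- The one-vertex amalgamation of `r` copies of `G` at the vertex `u`:
vertices are the identified vertex together with `r` copies of the other vertices. -/
def amalgam {V : Type*} (G : SimpleGraph V) (u : V) (r : ℕ) :
    SimpleGraph (Unit ⊕ ({x : V // x ≠ u} × Fin r)) where
  Adj a b :=
    match a, b with
    | Sum.inl _, Sum.inl _ => False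
    | Sum.inl _, Sum.inr (x, _) => G.Adj u x.1
    | Sum.inr (x, _), Sum.inl _ => G.Adj x.1 u
    | Sum.inr (x, i), Sum.inr (y, j) => i = j ∧ G.Adj x.1 y.1
  symm := by
    refine ⟨?_⟩
    rintro (a | ⟨x, i⟩) (b | ⟨y, j⟩) h
    · exact h
    · exact h.symm
    · exact h.symm
    · exact ⟨h.1.symm, h.2.symm⟩
  loopless := by
    refine ⟨?_⟩
    rintro (a | ⟨x, i⟩) h
    · exact h
    · exact (G.ne_of_adj h.2) rfl

/-!
Within one copy, distances in `rG(u)` are those of `G` (the projection onto a copy is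
non-expanding), and between different copies every path passes through the hub, so
`d((x,i),(y,j)) = d(x,u) + d(u,y)`. Summing, the transmission of `(x,i)` is
`Tr_G x + (r-1)((n-1) d(x,u) + Tr_G u)`, also for `x = u`, the hub. For an edge `xy` inside a copy
and `G` transmission regular, the two transmissions thus differ by `(r-1)(n-1)(d(x,u) - d(y,u))`,
and `|d(x,u) - d(y,u)| = 1` because `G` is bipartite.
-/

namespace SimpleGraph

variable {V W : Type*}

theorem Walk.le_add_length_of_adj_le_add_one {H : SimpleGraph W} {f : W → ℕ}
    (hf : ∀ a b, H.Adj a b → f a ≤ f b + 1) {a b : W} (p : H.Walk a b) :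
    f a ≤ f b + p.length := by
  induction p with
  | nil => simp
  | cons h _ ih => rw [Walk.length_cons]; linarith [hf _ _ h]

theorem Reachable.le_add_dist_of_adj_le_add_one {H : SimpleGraph W} {f : W → ℕ}
    (hf : ∀ a b, H.Adj a b → f a ≤ f b + 1) {a b : W} (h : H.Reachable a b) :
    f a ≤ f b + H.dist a b := by
  obtain ⟨p, hp⟩ := h.exists_walk_length_eq_dist
  exact hp ▸ p.le_add_length_of_adj_le_add_one hf

theorem Adj.dist_le_dist_add_one {G : SimpleGraph V} {v w : V} (h : G.Adj v w) (x : V) :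
    G.dist x w ≤ G.dist x v + 1 := by
  rcases h.diff_dist_adj (u := x) with h | h | h <;> omega

theorem Colorable.dist_ne_of_adj {G : SimpleGraph V} (hc : G.Colorable 2) {u v w : V}
    (hadj : G.Adj v w) (hreach : G.Reachable u v) : G.dist u v ≠ G.dist u w := by
  have c : G.Coloring Bool := G.recolorOfEquiv finTwoEquiv hc.some
  obtain ⟨p, hp⟩ := hreach.exists_walk_length_eq_dist
  obtain ⟨q, hq⟩ := (hreach.trans hadj.reachable).exists_walk_length_eq_dist
  intro h
  have hcongr : (c u ↔ c v) ↔ (c u ↔ c w) := by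
    rw [← c.even_length_iff_congr p, ← c.even_length_iff_congr q, hp, hq, h]
  exact c.valid hadj (by grind)

theorem Colorable.natAbs_dist_sub_dist_of_adj {G : SimpleGraph V} (hc : G.Colorable 2)
    {u v w : V} (hadj : G.Adj v w) (hreach : G.Reachable u v) :
    ((G.dist u v : ℤ) - G.dist u w).natAbs = 1 := by
  have := hc.dist_ne_of_adj hadj hreach
  rcases hadj.diff_dist_adj (u := u) with h | h | h <;> omega

end SimpleGraph

theorem tr_eq_dist_add_sum_ne {V : Type*} [Fintype V] [DecidableEq V] (G : SimpleGraph V)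
    (x u : V) : Tr G x = G.dist x u + ∑ y : {y // y ≠ u}, G.dist x y :=
  Fintype.sum_eq_add_sum_subtype_ne _ u

namespace amalgam

variable {V : Type*} [DecidableEq V] {G : SimpleGraph V} {u : V} {r : ℕ}

variable (G u r) in
def copy (i : Fin r) : G →g amalgam G u r where
  toFun x := if h : x = u then Sum.inl () else Sum.inr (⟨x, h⟩, i)
  map_rel' {x y} h := by
    by_cases hx : x = u <;> by_cases hy : y = u
    · exact absurd (hx ▸ hy ▸ h) G.irrefl
    all_goals simp only [hx, hy, dif_pos, dif_neg, not_false_eq_true]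
    · exact hx ▸ h
    · exact hy ▸ h
    · exact ⟨rfl, h⟩

variable (u) in
def proj (i : Fin r) : Unit ⊕ ({x : V // x ≠ u} × Fin r) → V :=
  Sum.elim (fun _ ↦ u) (fun p ↦ if p.2 = i then p.1.1 else u)

theorem copy_self (i : Fin r) : copy G u r i u = Sum.inl () := dif_pos rfl

theorem copy_coe (i : Fin r) (x : {x : V // x ≠ u}) : copy G u r i x = Sum.inr (x, i) :=
  dif_neg x.2

theorem proj_copy (i j : Fin r) (x : V) :
    proj u i (copy G u r j x) = if j = i then x else u := by
  by_cases hx : x = u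
  · subst hx; simp [copy_self, proj]
  · simp [copy_coe (x := ⟨x, hx⟩), proj]

theorem exists_copy_of_adj {a b : Unit ⊕ ({x : V // x ≠ u} × Fin r)}
    (h : (amalgam G u r).Adj a b) :
    ∃ i x y, G.Adj x y ∧ copy G u r i x = a ∧ copy G u r i y = b := by
  rcases a with ⟨⟩ | ⟨x, i⟩ <;> rcases b with ⟨⟩ | ⟨y, j⟩
  · exact h.elim
  · exact ⟨j, u, y, h, copy_self j, copy_coe j y⟩
  · exact ⟨i, x, u, h, copy_coe i x, copy_self i⟩
  · obtain ⟨rfl, h⟩ := h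
    exact ⟨i, x, y, h, copy_coe i x, copy_coe i y⟩

theorem proj_eq_or_adj (i : Fin r) {a b : Unit ⊕ ({x : V // x ≠ u} × Fin r)}
    (h : (amalgam G u r).Adj a b) : proj u i a = proj u i b ∨ G.Adj (proj u i a) (proj u i b) := by
  obtain ⟨k, x, y, hxy, rfl, rfl⟩ := exists_copy_of_adj h
  simp only [proj_copy]
  split_ifs
  · exact Or.inr hxy
  · exact Or.inl rfl

theorem proj_eq_or_proj_eq {i j : Fin r} (hij : i ≠ j) {a b : Unit ⊕ ({x : V // x ≠ u} × Fin r)}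
    (h : (amalgam G u r).Adj a b) : proj u i a = proj u i b ∨ proj u j a = proj u j b := by
  obtain ⟨k, x, y, -, rfl, rfl⟩ := exists_copy_of_adj h
  simp only [proj_copy]
  by_cases hk : k = i
  · subst hk; simp [hij]
  · simp [hk]

theorem dist_proj_le_dist_proj_add_one (x : V) (i : Fin r)
    {a b : Unit ⊕ ({x : V // x ≠ u} × Fin r)} (h : (amalgam G u r).Adj a b) :
    G.dist x (proj u i a) ≤ G.dist x (proj u i b) + 1 := by
  rcases proj_eq_or_adj i h with h | h
  · rw [h]; omega
  · exact h.symm.dist_le_dist_add_one x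

theorem reachable_copy_copy (hconn : G.Connected) (i j : Fin r) (x y : V) :
    (amalgam G u r).Reachable (copy G u r i x) (copy G u r j y) := by
  have hx := (hconn x u).map (copy G u r i)
  have hy := (hconn u y).map (copy G u r j)
  rw [copy_self] at hx hy
  exact hx.trans hy

theorem dist_copy_copy (hconn : G.Connected) (i : Fin r) (x y : V) :
    (amalgam G u r).dist (copy G u r i x) (copy G u r i y) = G.dist x y := by
  refine le_antisymm ?_ ?_
  · obtain ⟨p, hp⟩ := (hconn x y).exists_walk_length_eq_dist
    simpa [hp] using SimpleGraph.dist_le (p.map (copy G u r i))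
  · have := (reachable_copy_copy hconn i i y x).le_add_dist_of_adj_le_add_one
      (f := fun w ↦ G.dist x (proj u i w)) fun a b h ↦ dist_proj_le_dist_proj_add_one x i h
    simpa [proj_copy, SimpleGraph.dist_comm] using this

theorem dist_copy_copy_of_ne (hconn : G.Connected) {i j : Fin r} (hij : i ≠ j) (x y : V) :
    (amalgam G u r).dist (copy G u r i x) (copy G u r j y) = G.dist x u + G.dist u y := by
  refine le_antisymm ?_ ?_
  · calc (amalgam G u r).dist (copy G u r i x) (copy G u r j y)
        ≤ (amalgam G u r).dist (copy G u r i x) (copy G u r j u)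
          + (amalgam G u r).dist (copy G u r j u) (copy G u r j y) :=
          (reachable_copy_copy hconn i j x u).dist_triangle_left _
      _ = G.dist x u + G.dist u y := by
          rw [dist_copy_copy hconn, copy_self j, ← copy_self i, dist_copy_copy hconn]
  · -- An edge lies in a single copy, so it moves at most one of the two projections.
    have := (reachable_copy_copy hconn j i y x).le_add_dist_of_adj_le_add_one
      (f := fun w ↦ G.dist x (proj u i w) + G.dist u (proj u j w)) fun a b h ↦ by
        rcases proj_eq_or_proj_eq hij h with hi | hj
        · grw [hi, dist_proj_le_dist_proj_add_one u j h]; omega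
        · grw [hj, dist_proj_le_dist_proj_add_one x i h]; omega
    simpa [proj_copy, hij, Ne.symm hij, SimpleGraph.dist_comm] using this

theorem tr_copy [Fintype V] (hconn : G.Connected) (i : Fin r) (x : V) :
    Tr (amalgam G u r) (copy G u r i x)
      = Tr G x + (r - 1) * ((Fintype.card V - 1) * G.dist x u + Tr G u) := by
  have hsame : ∑ y : {y // y ≠ u}, (amalgam G u r).dist (copy G u r i x) (Sum.inr (y, i))
      = ∑ y : {y // y ≠ u}, G.dist x y := by
    simp_rw [← copy_coe (G := G), dist_copy_copy hconn]
  have hother : ∀ j ≠ i,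
      ∑ y : {y // y ≠ u}, (amalgam G u r).dist (copy G u r i x) (Sum.inr (y, j))
        = (Fintype.card V - 1) * G.dist x u + Tr G u := by
    intro j hj
    simp_rw [← copy_coe (G := G), dist_copy_copy_of_ne hconn hj.symm]
    rw [Finset.sum_add_distrib, Finset.sum_const, Finset.card_univ, smul_eq_mul,
      tr_eq_dist_add_sum_ne G u u, SimpleGraph.dist_self, zero_add]
    simp [Fintype.card_subtype_compl]
  calc Tr (amalgam G u r) (copy G u r i x)
      = (amalgam G u r).dist (copy G u r i x) (copy G u r i u)
        + ∑ j, ∑ y : {y // y ≠ u}, (amalgam G u r).dist (copy G u r i x) (Sum.inr (y, j)) := by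
        simp [Tr, Fintype.sum_sum_type, Fintype.sum_prod_type_right, copy_self]
    _ = G.dist x u + (∑ y : {y // y ≠ u}, G.dist x y
        + ∑ j ∈ Finset.univ.erase i, ((Fintype.card V - 1) * G.dist x u + Tr G u)) := by
        rw [dist_copy_copy hconn, ← Finset.add_sum_erase _ _ (Finset.mem_univ i), hsame,
          Finset.sum_congr rfl fun j hj ↦ hother j (Finset.ne_of_mem_erase hj)]
    _ = Tr G x + (r - 1) * ((Fintype.card V - 1) * G.dist x u + Tr G u) := by
        rw [Finset.sum_const, Finset.card_erase_of_mem (Finset.mem_univ i), Finset.card_univ,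
          Fintype.card_fin, smul_eq_mul, tr_eq_dist_add_sum_ne G x u, add_assoc]

end amalgam

theorem stmt_19_general {V : Type*} [Fintype V] [DecidableEq V] (G : SimpleGraph V) (hconn : G.Connected)
    (hbip : G.Colorable 2)
    (hreg : ∀ x y : V, Tr G x = Tr G y)
    (u : V) (r : ℕ) :
    IsKSTI (amalgam G u r) ((r - 1) * (Fintype.card V - 1)) := by
  intro a b hab
  obtain ⟨i, x, y, hxy, rfl, rfl⟩ := amalgam.exists_copy_of_adj hab
  have hdist : ((G.dist u x : ℤ) - G.dist u y).natAbs = 1 :=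
    hbip.natAbs_dist_sub_dist_of_adj hxy (hconn u x)
  rw [amalgam.tr_copy hconn, amalgam.tr_copy hconn, hreg x u, hreg y u,
    SimpleGraph.dist_comm (u := x), SimpleGraph.dist_comm (u := y)]
  calc _ = (((r - 1) * (Fintype.card V - 1) : ℕ) * ((G.dist u x : ℤ) - G.dist u y)).natAbs := by
        congr 1; push_cast; ring
    _ = (r - 1) * (Fintype.card V - 1) := by rw [Int.natAbs_mul, hdist, Int.natAbs_natCast, mul_one]

theorem stmt_19 {V : Type*} [Fintype V] [DecidableEq V] (G : SimpleGraph V) (hconn : G.Connected)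
    (hbip : G.Colorable 2)
    (hreg : ∀ x y : V, Tr G x = Tr G y)
    (u : V) (r : ℕ) (hr : 2 ≤ r) :
    IsKSTI (amalgam G u r) ((r - 1) * (Fintype.card V - 1)) :=
  stmt_19_general G hconn hbip hreg u r
end
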